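/- Let f = x1x6 − x2x5 + x3x4 ∈ ℂ[x1,…,x6], the defining equation of the affine cone over the Grassmannian of planes in 4-space. Then the ED data isotropic locus equals the variety itself: DI(f) = V(f); in particular DI(f) equals the dual variety V(f)*. -/

import Mathlib

open MvPolynomial Pointwise

/-- Gradient of a multivariate polynomial at a point. -/
noncomputable def grad {n : ℕ} (f : MvPolynomial (Fin n) ℂ) (x : Fin n → ℂ) : Fin n → ℂ :=
  fun i => eval x (pderiv i f)

/-- Zariski closure: zero locus of the ideal of all polynomials vanishing on `S`. -/
def zclosure {σ : Type} (S : Set (σ → ℂ)) : Set (σ → ℂ) :=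
  {x | ∀ p : MvPolynomial σ ℂ, (∀ s ∈ S, eval s p = 0) → eval x p = 0}

/-- Zero locus `V(f)`. -/
def Vp {n : ℕ} (f : MvPolynomial (Fin n) ℂ) : Set (Fin n → ℂ) := {x | eval x f = 0}

/-- Regular locus. -/
def RegL {n : ℕ} (f : MvPolynomial (Fin n) ℂ) : Set (Fin n → ℂ) :=
  {x | eval x f = 0 ∧ grad f x ≠ 0}

/-- Singular locus. -/
def SingL {n : ℕ} (f : MvPolynomial (Fin n) ℂ) : Set (Fin n → ℂ) :=
  {x | eval x f = 0 ∧ grad f x = 0}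

/-- ED correspondence: Zariski closure of pairs (u,x), x regular, u - x ∈ ℂ·∇f(x),
encoded as functions on `Fin n ⊕ Fin n`. -/
def EDcorr {n : ℕ} (f : MvPolynomial (Fin n) ℂ) : Set ((Fin n ⊕ Fin n) → ℂ) :=
  zclosure {w | ∃ u x : Fin n → ℂ, w = Sum.elim u x ∧ x ∈ RegL f ∧ ∃ t : ℂ, u - x = t • grad f x}

/-- ED data singular locus. -/
def DS {n : ℕ} (f : MvPolynomial (Fin n) ℂ) : Set (Fin n → ℂ) :=
  {u | ∃ x, Sum.elim u x ∈ EDcorr f ∧ x ∈ SingL f}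

/-- Dual variety. -/
def dualV {n : ℕ} (f : MvPolynomial (Fin n) ℂ) : Set (Fin n → ℂ) :=
  zclosure {y | ∃ (t : ℂ) (x : Fin n → ℂ), x ∈ RegL f ∧ y = t • grad f x}

/-- Isotropic quadric. -/
def isoQ (n : ℕ) : Set (Fin n → ℂ) := {x | ∑ i, (x i) ^ 2 = 0}

/-- ED data isotropic locus. -/
def DI {n : ℕ} (f : MvPolynomial (Fin n) ℂ) : Set (Fin n → ℂ) :=
  {u | ∃ x, Sum.elim u x ∈ EDcorr f ∧ x ∈ isoQ n ∩ Vp f}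

/-- Zariski-closed sets. -/
def IsZClosed {σ : Type} (S : Set (σ → ℂ)) : Prop := zclosure S = S

/-- Irreducibility with respect to Zariski-closed sets. -/
def IsZIrreducible {σ : Type} (S : Set (σ → ℂ)) : Prop :=
  S.Nonempty ∧ ∀ C₁ C₂ : Set (σ → ℂ), IsZClosed C₁ → IsZClosed C₂ →
    S ⊆ C₁ ∪ C₂ → S ⊆ C₁ ∨ S ⊆ C₂

/-- `C` is an irreducible component of `S`. -/
def IsIrredComponentOf {σ : Type} (C S : Set (σ → ℂ)) : Prop :=
  C ⊆ S ∧ IsZClosed C ∧ IsZIrreducible C ∧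
    ∀ C' : Set (σ → ℂ), IsZClosed C' → IsZIrreducible C' → C ⊆ C' → C' ⊆ S → C' = C



/- AUX SECTION (to be inserted before theorem) -/
section AuxGrass

noncomputable abbrev fG : MvPolynomial (Fin 6) ℂ := X 0 * X 5 - X 1 * X 4 + X 2 * X 3

@[simp] lemma cons_val_five' {α : Type*} (a b c d e f : α) :
    ![a, b, c, d, e, f] (5 : Fin 6) = f := rfl

noncomputable def sgn : Fin 6 → ℂ := ![1,-1,1,1,-1,1]
noncomputable def gf (x : Fin 6 → ℂ) : Fin 6 → ℂ := fun i => sgn i * x (5 - i)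

lemma sgn_ne : ∀ i : Fin 6, sgn i ≠ 0 := by
  intro i; fin_cases i <;> simp (config := { decide := true }) [sgn]

@[simp] lemma gf0 (x : Fin 6 → ℂ) : gf x 0 = x 5 := by norm_num [gf, sgn]
@[simp] lemma gf1 (x : Fin 6 → ℂ) : gf x 1 = -x 4 := by norm_num [gf, sgn]; rfl
@[simp] lemma gf2 (x : Fin 6 → ℂ) : gf x 2 = x 3 := by
  show (![1,-1,1,1,-1,1] : Fin 6 → ℂ) 2 * x 3 = x 3
  rw [show (![1,-1,1,1,-1,1] : Fin 6 → ℂ) 2 = 1 from rfl, one_mul]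
@[simp] lemma gf3 (x : Fin 6 → ℂ) : gf x 3 = x 2 := by
  show (![1,-1,1,1,-1,1] : Fin 6 → ℂ) 3 * x 2 = x 2
  rw [show (![1,-1,1,1,-1,1] : Fin 6 → ℂ) 3 = 1 from rfl, one_mul]
@[simp] lemma gf4 (x : Fin 6 → ℂ) : gf x 4 = -x 1 := by
  show (![1,-1,1,1,-1,1] : Fin 6 → ℂ) 4 * x 1 = -x 1
  rw [show (![1,-1,1,1,-1,1] : Fin 6 → ℂ) 4 = -1 from rfl, neg_one_mul]
@[simp] lemma gf5 (x : Fin 6 → ℂ) : gf x 5 = x 0 := by norm_num [gf, sgn]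

lemma grad_fG (x : Fin 6 → ℂ) : grad fG x = gf x := by
  funext i; fin_cases i <;>
    simp (config := { decide := true })
      [grad, gf, sgn, pderiv_mul, pderiv_X, Pi.single_apply]

lemma gf_gf (x : Fin 6 → ℂ) : gf (gf x) = x := by
  funext i; fin_cases i <;> simp (config := { decide := true }) [gf, sgn]

lemma eval_fG (x : Fin 6 → ℂ) : eval x fG = x 0 * x 5 - x 1 * x 4 + x 2 * x 3 := by simp

lemma eval_fG_gf (x : Fin 6 → ℂ) : eval (gf x) fG = eval x fG := by
  simp [eval_fG]; ring

lemma curve_limit {σ : Type} (p : MvPolynomial σ ℂ) (a b : σ → ℂ)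
    (h : ∀ ε : ℂ, ε ≠ 0 → eval (fun i => a i * ε + b i) p = 0) :
    eval b p = 0 := by
  set φ : σ → Polynomial ℂ := fun i => Polynomial.C (a i) * Polynomial.X + Polynomial.C (b i)
    with hφdef
  set q : Polynomial ℂ := aeval φ p with hqdef
  have hq : ∀ ε : ℂ, Polynomial.eval ε q = eval (fun i => a i * ε + b i) p := by
    intro ε
    have h1 : q = eval₂ Polynomial.C φ p := by rw [hqdef, aeval_def]; rfl
    have hcomp := MvPolynomial.eval₂_comp_left (Polynomial.evalRingHom ε)
      (Polynomial.C : ℂ →+* Polynomial ℂ) φ p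
    have h2 : (Polynomial.evalRingHom ε).comp (Polynomial.C : ℂ →+* Polynomial ℂ)
        = RingHom.id ℂ := RingHom.ext fun r => by simp
    have h3 : (⇑(Polynomial.evalRingHom ε)) ∘ φ = fun i => a i * ε + b i := by
      funext i; simp [hφdef]
    rw [h1, show Polynomial.eval ε (eval₂ Polynomial.C φ p)
        = (Polynomial.evalRingHom ε) (eval₂ Polynomial.C φ p) from rfl, hcomp, h2, h3,
      MvPolynomial.eval₂_id]
  have hq0 : q = 0 := by
    apply Polynomial.eq_zero_of_infinite_isRoot
    apply Set.Infinite.mono (s := {ε : ℂ | ε ≠ 0})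
    · intro ε hε; exact (hq ε).trans (h ε hε)
    · have := (Set.finite_singleton (0:ℂ)).infinite_compl
      simpa [Set.compl_singleton_eq] using this
  have h0 := hq 0
  rw [hq0] at h0
  simp only [Polynomial.eval_zero] at h0
  have hb : (fun i => a i * 0 + b i) = b := by funext i; ring
  rw [hb] at h0
  exact h0.symm

/-- the parametrized ED correspondence set -/
def E0 : Set ((Fin 6 ⊕ Fin 6) → ℂ) :=
  {w | ∃ u x : Fin 6 → ℂ, w = Sum.elim u x ∧ x ∈ RegL fG ∧ ∃ t : ℂ, u - x = t • grad fG x}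

noncomputable def Gp (j : Fin 6) : MvPolynomial (Fin 6 ⊕ Fin 6) ℂ :=
  C (sgn j) * X (Sum.inr (5 - j))

noncomputable def Mp (i j : Fin 6) : MvPolynomial (Fin 6 ⊕ Fin 6) ℂ :=
  (X (Sum.inl i) - X (Sum.inr i)) * Gp j - (X (Sum.inl j) - X (Sum.inr j)) * Gp i

noncomputable def Pp : MvPolynomial (Fin 6 ⊕ Fin 6) ℂ :=
  X (Sum.inl 0) * X (Sum.inl 5) - X (Sum.inl 1) * X (Sum.inl 4) + X (Sum.inl 2) * X (Sum.inl 3)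
    - (Gp 0 * X (Sum.inl 0) + Gp 1 * X (Sum.inl 1) + Gp 2 * X (Sum.inl 2)
       + Gp 3 * X (Sum.inl 3) + Gp 4 * X (Sum.inl 4) + Gp 5 * X (Sum.inl 5))

lemma eval_Gp (u x : Fin 6 → ℂ) (j : Fin 6) :
    eval (Sum.elim u x) (Gp j) = gf x j := by simp [Gp, gf]

lemma eval_Mp (u x : Fin 6 → ℂ) (i j : Fin 6) :
    eval (Sum.elim u x) (Mp i j)
      = (u i - x i) * gf x j - (u j - x j) * gf x i := by
  simp [Mp, eval_Gp]

lemma eval_Pp (u x : Fin 6 → ℂ) :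
    eval (Sum.elim u x) Pp
      = (u 0 * u 5 - u 1 * u 4 + u 2 * u 3)
        - (x 5 * u 0 - x 4 * u 1 + x 3 * u 2 + x 2 * u 3 - x 1 * u 4 + x 0 * u 5) := by
  simp [Pp, eval_Gp]; ring

lemma hv_of_mem {u x : Fin 6 → ℂ} {t : ℂ} (ht : u - x = t • grad fG x) :
    ∀ m, u m - x m = t * gf x m := by
  intro m
  have := congrFun ht m
  rwa [Pi.sub_apply, Pi.smul_apply, smul_eq_mul, grad_fG] at this

lemma Mp_van (i j : Fin 6) : ∀ w ∈ E0, eval w (Mp i j) = 0 := by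
  rintro w ⟨u, x, rfl, _, t, ht⟩
  have hv := hv_of_mem ht
  rw [eval_Mp, hv i, hv j]; ring

lemma Pp_van : ∀ w ∈ E0, eval w Pp = 0 := by
  rintro w ⟨u, x, rfl, ⟨hfx, -⟩, t, ht⟩
  have hv := hv_of_mem ht
  have hu : ∀ m, u m = x m + t * gf x m := by
    intro m; have := hv m; linear_combination this
  rw [eval_fG] at hfx
  rw [eval_Pp, hu 0, hu 1, hu 2, hu 3, hu 4, hu 5]
  simp only [gf0, gf1, gf2, gf3, gf4, gf5]
  linear_combination (t ^ 2 - 1) * hfx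


noncomputable def e0 : Fin 6 → ℂ := fun i => if i = 0 then 1 else 0

end AuxGrass


/-- For the affine cone over the Grassmannian of planes in 4-space,
`f = x₁x₆ - x₂x₅ + x₃x₄`, the ED data isotropic locus equals the variety itself;
in particular it equals the dual variety. -/
theorem DI_grassmannian :
    DI (X 0 * X 5 - X 1 * X 4 + X 2 * X 3 : MvPolynomial (Fin 6) ℂ) =
      Vp (X 0 * X 5 - X 1 * X 4 + X 2 * X 3 : MvPolynomial (Fin 6) ℂ) ∧
    DI (X 0 * X 5 - X 1 * X 4 + X 2 * X 3 : MvPolynomial (Fin 6) ℂ) =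
      dualV (X 0 * X 5 - X 1 * X 4 + X 2 * X 3 : MvPolynomial (Fin 6) ℂ) := by
  have h55 : ∀ m : Fin 6, (5 : Fin 6) - (5 - m) = m := by decide
  have hpart1 : DI fG = Vp fG := by
    apply Set.Subset.antisymm
    · -- DI ⊆ Vp
      rintro u ⟨x, hmem, hQ, hVx⟩
      have hE : ∀ p : MvPolynomial (Fin 6 ⊕ Fin 6) ℂ,
          (∀ s ∈ E0, eval s p = 0) → eval (Sum.elim u x) p = 0 := fun p hp => hmem p hp
      have hQ' : x 0 ^ 2 + x 1 ^ 2 + x 2 ^ 2 + x 3 ^ 2 + x 4 ^ 2 + x 5 ^ 2 = 0 := by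
        have := hQ; rwa [isoQ, Set.mem_setOf_eq, Fin.sum_univ_six] at this
      have hfx : x 0 * x 5 - x 1 * x 4 + x 2 * x 3 = 0 := by
        have := hVx; rwa [Vp, Set.mem_setOf_eq, eval_fG] at this
      have hp := hE Pp Pp_van
      rw [eval_Pp] at hp
      show eval u fG = 0
      rw [eval_fG]
      by_cases hx0 : x = 0
      · subst hx0
        simp only [Pi.zero_apply] at hp
        linear_combination hp
      · obtain ⟨k, hk⟩ := Function.ne_iff.mp hx0
        have hM : ∀ i j : Fin 6, (u i - x i) * gf x j = (u j - x j) * gf x i := by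
          intro i j
          have := hE (Mp i j) (Mp_van i j)
          rw [eval_Mp] at this
          exact sub_eq_zero.mp this
        set j := (5 : Fin 6) - k with hj
        have hGj : gf x j ≠ 0 := by
          have : gf x j = sgn j * x k := by rw [show gf x j = sgn j * x (5 - j) from rfl, hj, h55]
          rw [this]
          exact mul_ne_zero (sgn_ne j) hk
        have hS : (∑ i, gf x i ^ 2) = 0 := by
          rw [Fin.sum_univ_six]
          simp only [gf0, gf1, gf2, gf3, gf4, gf5]
          linear_combination hQ'
        have hc : (∑ i, gf x i * (u i - x i)) * gf x j = 0 := by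
          rw [Finset.sum_mul]
          have hcongr : ∀ i ∈ Finset.univ, gf x i * (u i - x i) * gf x j
              = gf x i ^ 2 * (u j - x j) := by
            intro i _
            linear_combination (gf x i) * hM i j
          rw [Finset.sum_congr rfl hcongr, ← Finset.sum_mul, hS, zero_mul]
        have hcz : (∑ i, gf x i * (u i - x i)) = 0 :=
          (mul_eq_zero.mp hc).resolve_right hGj
        rw [Fin.sum_univ_six] at hcz
        simp only [gf0, gf1, gf2, gf3, gf4, gf5] at hcz
        linear_combination hp + hcz + 2 * hfx
    · -- Vp ⊆ DI
      intro u hu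
      have hfu : u 0 * u 5 - u 1 * u 4 + u 2 * u 3 = 0 := by
        have := hu; rwa [Vp, Set.mem_setOf_eq, eval_fG] at this
      refine ⟨0, ?_, ?_, ?_⟩
      · -- Sum.elim u 0 ∈ EDcorr fG
        intro p hp
        by_cases hu0 : u = 0
        · subst hu0
          have e0mem : ∀ ε : ℂ, ε ≠ 0 →
              (fun i => Sum.elim e0 e0 i * ε + Sum.elim (0 : Fin 6 → ℂ) 0 i) ∈ E0 := by
            intro ε hε
            refine ⟨fun i => e0 i * ε, fun i => e0 i * ε, ?_, ⟨?_, ?_⟩, 0, ?_⟩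
            · funext s; cases s <;> simp
            · rw [eval_fG]; simp [e0]
            · rw [grad_fG]
              intro hcon
              have := congrFun hcon 5
              rw [gf5, Pi.zero_apply] at this
              simp [e0] at this
              exact hε this
            · simp
          exact curve_limit p (Sum.elim e0 e0) (Sum.elim 0 0)
            (fun ε hε => hp _ (e0mem ε hε))
        · have cmem : ∀ ε : ℂ, ε ≠ 0 →
              (fun i => Sum.elim (gf u) (gf u) i * ε + Sum.elim u (0 : Fin 6 → ℂ) i) ∈ E0 := by
            intro ε hε
            refine ⟨fun i => gf u i * ε + u i, fun i => gf u i * ε, ?_, ⟨?_, ?_⟩, ε⁻¹, ?_⟩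
            · funext s; cases s <;> simp
            · rw [eval_fG]; simp only [gf0, gf1, gf2, gf3, gf4, gf5]
              linear_combination (ε ^ 2) * hfu
            · rw [grad_fG]
              have hgx : gf (fun i => gf u i * ε) = fun m => u m * ε := by
                funext m
                have h1 : gf (fun i => gf u i * ε) m = (sgn m * gf u (5 - m)) * ε := by
                  rw [show gf (fun i => gf u i * ε) m = sgn m * (gf u (5 - m) * ε) from rfl]
                  ring
                have h2 : sgn m * gf u (5 - m) = u m := by
                  have := congrFun (gf_gf u) m
                  rwa [show gf (gf u) m = sgn m * gf u (5 - m) from rfl] at this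
                rw [h1, h2]
              rw [hgx]
              intro hcon
              obtain ⟨m, hm⟩ := Function.ne_iff.mp hu0
              have := congrFun hcon m
              rw [Pi.zero_apply] at this
              exact hm ((mul_eq_zero.mp this).resolve_right hε)
            · have hgx : grad fG (fun i => gf u i * ε) = fun m => u m * ε := by
                rw [grad_fG]
                funext m
                have h1 : gf (fun i => gf u i * ε) m = (sgn m * gf u (5 - m)) * ε := by
                  rw [show gf (fun i => gf u i * ε) m = sgn m * (gf u (5 - m) * ε) from rfl]
                  ring
                have h2 : sgn m * gf u (5 - m) = u m := by
                  have := congrFun (gf_gf u) m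
                  rwa [show gf (gf u) m = sgn m * gf u (5 - m) from rfl] at this
                rw [h1, h2]
              rw [hgx]
              funext m
              rw [Pi.sub_apply, Pi.smul_apply, smul_eq_mul]
              field_simp
              ring
          exact curve_limit p (Sum.elim (gf u) (gf u)) (Sum.elim u 0)
            (fun ε hε => hp _ (cmem ε hε))
      · show (∑ i : Fin 6, ((0 : Fin 6 → ℂ) i) ^ 2) = 0
        simp
      · show eval (0 : Fin 6 → ℂ) fG = 0
        rw [eval_fG]; simp
  have hdual : dualV fG = Vp fG := by
    apply Set.Subset.antisymm
    · intro y hy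
      apply hy fG
      rintro s ⟨t, x, ⟨hfx, -⟩, rfl⟩
      rw [eval_fG] at hfx
      rw [grad_fG, eval_fG]
      simp only [Pi.smul_apply, smul_eq_mul, gf0, gf1, gf2, gf3, gf4, gf5]
      linear_combination (t ^ 2) * hfx
    · intro y hy
      intro p hp
      apply hp
      by_cases hy0 : y = 0
      · refine ⟨0, e0, ⟨?_, ?_⟩, ?_⟩
        · rw [eval_fG]; simp [e0]
        · rw [grad_fG]
          intro hcon
          have := congrFun hcon 5
          rw [gf5, Pi.zero_apply] at this
          simp [e0] at this
        · rw [hy0, zero_smul]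
      · refine ⟨1, gf y, ⟨?_, ?_⟩, ?_⟩
        · rw [eval_fG_gf]; exact hy
        · rw [grad_fG, gf_gf]; exact hy0
        · rw [grad_fG, gf_gf, one_smul]
  exact ⟨hpart1, hpart1.trans hdual.symm⟩
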